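/- For θ > 0 and k ≥ 1, the integral ∫_0^∞ u^θ (g(u) − f_n(u)) du, where g is the χ²_k density and f_n is the density of n·Beta(k/2,(n−k)/2), equals Γ((2θ+k)/2)/Γ(k/2) · [2^θ − n^θ Γ(n/2)/Γ(θ + n/2)], and this quantity is O(1/n) as n → ∞. -/

import Mathlib

open MeasureTheory Filter Real Set


lemma wendel_upper {x s : ℝ} (hx : 0 < x) (hs : 0 ≤ s) (hs1 : s ≤ 1) :
    Real.Gamma (x + s) ≤ x ^ s * Real.Gamma x := by
  have hx1 : (0:ℝ) < x + 1 := by linarith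
  have h := Real.convexOn_log_Gamma.2 (Set.mem_Ioi.2 hx) (Set.mem_Ioi.2 hx1)
    (by linarith : (0:ℝ) ≤ 1 - s) hs (by ring)
  simp only [smul_eq_mul, Function.comp] at h
  rw [show (1 - s) * x + s * (x + 1) = x + s by ring] at h
  have hΓx : 0 < Real.Gamma x := Real.Gamma_pos_of_pos hx
  have hΓxs : 0 < Real.Gamma (x + s) := Real.Gamma_pos_of_pos (by linarith)
  have hΓx1 : Real.Gamma (x + 1) = x * Real.Gamma x := Real.Gamma_add_one hx.ne'
  have hkey : Real.log (Real.Gamma (x + s)) ≤ Real.log (x ^ s * Real.Gamma x) := by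
    rw [Real.log_mul (by positivity) hΓx.ne', Real.log_rpow hx]
    rw [hΓx1, Real.log_mul hx.ne' hΓx.ne'] at h
    linarith
  exact (Real.log_le_log_iff hΓxs (by positivity)).1 hkey

lemma wendel_lower {x s : ℝ} (hx : 0 < x) (hs : 0 ≤ s) (hs1 : s ≤ 1) :
    x * Real.Gamma x ≤ Real.Gamma (x + s) * (x + s) ^ (1 - s) := by
  have hxs : (0:ℝ) < x + s := by linarith
  have h := Real.convexOn_log_Gamma.2 (Set.mem_Ioi.2 hxs)
    (Set.mem_Ioi.2 (by linarith : (0:ℝ) < x + s + 1))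
    hs (by linarith : (0:ℝ) ≤ 1 - s) (by ring)
  simp only [smul_eq_mul, Function.comp] at h
  rw [show s * (x + s) + (1 - s) * (x + s + 1) = x + 1 by ring] at h
  have hΓxs : 0 < Real.Gamma (x + s) := Real.Gamma_pos_of_pos hxs
  have hΓx : 0 < Real.Gamma x := Real.Gamma_pos_of_pos hx
  have hΓxs1 : Real.Gamma (x + s + 1) = (x + s) * Real.Gamma (x + s) := Real.Gamma_add_one hxs.ne'
  have hΓx1 : Real.Gamma (x + 1) = x * Real.Gamma x := Real.Gamma_add_one hx.ne'
  have hkey : Real.log (x * Real.Gamma x) ≤ Real.log (Real.Gamma (x + s) * (x + s) ^ (1 - s)) := by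
    rw [Real.log_mul hx.ne' hΓx.ne', Real.log_mul hΓxs.ne' (by positivity), Real.log_rpow hxs]
    rw [hΓx1, hΓxs1, Real.log_mul hx.ne' hΓx.ne', Real.log_mul hxs.ne' hΓxs.ne'] at h
    linarith
  exact (Real.log_le_log_iff (by positivity) (by positivity)).1 hkey

lemma ratio_base {x θ : ℝ} (hx : 1 ≤ x) (hθ : 0 < θ) (hθ1 : θ ≤ 1) :
    |Real.Gamma (x + θ) / (x ^ θ * Real.Gamma x) - 1| ≤ θ / x := by
  have hx0 : (0:ℝ) < x := by linarith
  have hΓx : 0 < Real.Gamma x := Real.Gamma_pos_of_pos hx0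
  have hD : (0:ℝ) < x ^ θ * Real.Gamma x := by positivity
  have hxθ : (0:ℝ) < x + θ := by linarith
  have hup : Real.Gamma (x + θ) / (x ^ θ * Real.Gamma x) ≤ 1 :=
    (div_le_one hD).2 (wendel_upper hx0 hθ.le hθ1)
  have hlo : 1 - θ / x ≤ Real.Gamma (x + θ) / (x ^ θ * Real.Gamma x) := by
    have h1 : x * Real.Gamma x ≤ Real.Gamma (x + θ) * (x + θ) ^ (1 - θ) :=
      wendel_lower hx0 hθ.le hθ1
    -- r ≥ (x/(x+θ))^(1-θ)
    have h2 : (x / (x + θ)) ^ (1 - θ) ≤ Real.Gamma (x + θ) / (x ^ θ * Real.Gamma x) := by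
      rw [Real.div_rpow hx0.le hxθ.le, div_le_div_iff₀ (by positivity) hD]
      have hxsplit : x ^ (1 - θ) * (x ^ θ * Real.Gamma x) = x * Real.Gamma x := by
        rw [← mul_assoc, ← Real.rpow_add hx0]; norm_num
      rw [hxsplit]
      calc x * Real.Gamma x ≤ Real.Gamma (x + θ) * (x + θ) ^ (1 - θ) := h1
        _ = Real.Gamma (x + θ) * (x + θ) ^ (1 - θ) := rfl
    have h3 : x / (x + θ) ≤ (x / (x + θ)) ^ (1 - θ) := by
      have hband : x / (x + θ) ≤ 1 := (div_le_one hxθ).2 (by linarith)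
      have := Real.rpow_le_rpow_of_exponent_ge (div_pos hx0 hxθ) hband (by linarith : 1 - θ ≤ 1)
      simpa using this
    have h4 : 1 - θ / x ≤ x / (x + θ) := by
      have he : 1 - θ / x = (x - θ) / x := by field_simp
      rw [he, div_le_div_iff₀ hx0 hxθ]
      nlinarith
    linarith
  have hθx : 0 ≤ θ / x := by positivity
  rw [abs_le]
  constructor <;> linarith

lemma ratio_bound (m : ℕ) : ∀ θ : ℝ, 0 < θ → θ ≤ m →
    ∃ C : ℝ, 0 ≤ C ∧ ∀ x : ℝ, 1 ≤ x →
      |Real.Gamma (x + θ) / (x ^ θ * Real.Gamma x) - 1| ≤ C / x := by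
  induction m with
  | zero => intro θ hθ hm; norm_num at hm; linarith
  | succ m ih =>
    intro θ hθ hm
    by_cases h1 : θ ≤ 1
    · exact ⟨θ, hθ.le, fun x hx => ratio_base hx hθ h1⟩
    · push_neg at h1
      obtain ⟨C, hC0, hC⟩ := ih (θ - 1) (by linarith) (by push_cast at hm ⊢; linarith)
      refine ⟨C + (θ - 1) * (1 + C), by nlinarith, fun x hx => ?_⟩
      have hx0 : (0:ℝ) < x := by linarith
      have hΓx : 0 < Real.Gamma x := Real.Gamma_pos_of_pos hx0
      have hr' := hC x hx
      set r' := Real.Gamma (x + (θ - 1)) / (x ^ (θ - 1) * Real.Gamma x) with hr'def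
      have key : Real.Gamma (x + θ) / (x ^ θ * Real.Gamma x) = (1 + (θ - 1) / x) * r' := by
        have hΓrec : Real.Gamma (x + θ) = (x + (θ - 1)) * Real.Gamma (x + (θ - 1)) := by
          have := Real.Gamma_add_one (s := x + (θ - 1)) (by linarith : (0:ℝ) < x + (θ - 1)).ne'
          rw [show x + (θ - 1) + 1 = x + θ by ring] at this
          exact this
        have hxθ : x * x ^ (θ - 1) = x ^ θ := by
          rw [Real.rpow_sub hx0, Real.rpow_one]
          field_simp
        rw [hΓrec, ← hxθ, hr'def]
        have h6 : (1 + (θ - 1) / x) = (x + (θ - 1)) / x := by field_simp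
        rw [h6, div_mul_div_comm, mul_assoc]
      rw [key]
      have habs : |(1 + (θ - 1) / x) * r' - 1| ≤ |r' - 1| + ((θ - 1) / x) * |r'| := by
        have : (1 + (θ - 1) / x) * r' - 1 = (r' - 1) + ((θ - 1) / x) * r' := by ring
        rw [this]
        refine (abs_add_le _ _).trans ?_
        rw [abs_mul, abs_of_nonneg (div_nonneg (by linarith) hx0.le : (0:ℝ) ≤ (θ - 1) / x)]
      have hr'abs : |r'| ≤ 1 + C := by
        have : |r'| - |(1:ℝ)| ≤ |r' - 1| := by
          simpa using abs_sub_abs_le_abs_sub r' 1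
        have hCx : C / x ≤ C := by
          rw [div_le_iff₀ hx0]; nlinarith
        simp only [abs_one] at this
        linarith
      calc |(1 + (θ - 1) / x) * r' - 1| ≤ |r' - 1| + ((θ - 1) / x) * |r'| := habs
        _ ≤ C / x + ((θ - 1) / x) * (1 + C) := by
            have h5 : ((θ - 1) / x) * |r'| ≤ ((θ - 1) / x) * (1 + C) :=
              mul_le_mul_of_nonneg_left hr'abs (div_nonneg (by linarith) hx0.le)
            linarith
        _ = (C + (θ - 1) * (1 + C)) / x := by field_simp

lemma part2 (θ : ℝ) (hθ : 0 < θ) : ∃ C : ℝ, ∀ᶠ n : ℕ in Filter.atTop,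
    |(n : ℝ) ^ θ * Real.Gamma ((n : ℝ) / 2) / Real.Gamma (θ + (n : ℝ) / 2) - 2 ^ θ|
      ≤ C / (n : ℝ) := by
  obtain ⟨C, hC0, hC⟩ := ratio_bound ⌈θ⌉₊ θ hθ (Nat.le_ceil θ)
  refine ⟨2 ^ θ * (4 * C), ?_⟩
  rw [Filter.eventually_atTop]
  refine ⟨max 2 (⌈4 * C⌉₊ + 1), fun n hn => ?_⟩
  have hn2 : (2:ℕ) ≤ n := le_trans (le_max_left _ _) hn
  have hn4C : 4 * C ≤ (n : ℝ) := by
    have h1 : (⌈4 * C⌉₊ : ℝ) ≤ n := by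
      exact_mod_cast le_trans (Nat.le_succ _) (le_trans (le_max_right _ _) hn)
    exact le_trans (Nat.le_ceil _) h1
  have hnR : (2:ℝ) ≤ (n:ℝ) := by exact_mod_cast hn2
  have hn0 : (0:ℝ) < n := by linarith
  set x : ℝ := (n : ℝ) / 2 with hxdef
  have hx1 : 1 ≤ x := by rw [hxdef]; linarith
  have hx0 : (0:ℝ) < x := by linarith
  have hΓx : 0 < Real.Gamma x := Real.Gamma_pos_of_pos hx0
  have hΓxθ : 0 < Real.Gamma (x + θ) := Real.Gamma_pos_of_pos (by linarith)
  have hr := hC x hx1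
  set r : ℝ := Real.Gamma (x + θ) / (x ^ θ * Real.Gamma x) with hrdef
  have hr0 : 0 < r := by positivity
  have hCx : C / x ≤ 1 / 2 := by
    rw [div_le_div_iff₀ hx0 (by norm_num : (0:ℝ) < 2)]
    rw [hxdef]; linarith
  have hrhalf : (1:ℝ)/2 ≤ r := by
    have := abs_le.1 (hr.trans hCx)
    linarith [this.1]
  have hval : (n : ℝ) ^ θ * Real.Gamma ((n : ℝ) / 2) / Real.Gamma (θ + (n : ℝ) / 2)
      = 2 ^ θ / r := by
    have hn2x : (n : ℝ) = 2 * x := by rw [hxdef]; ring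
    have hnθ : (n : ℝ) ^ θ = 2 ^ θ * x ^ θ := by
      rw [hn2x, Real.mul_rpow (by norm_num) hx0.le]
    rw [show θ + (n:ℝ)/2 = x + θ by rw [hxdef]; ring, hnθ, hrdef]
    have hxθ0 : (0:ℝ) < x ^ θ := Real.rpow_pos_of_pos hx0 θ
    field_simp
    ring
  rw [hval]
  have hne : 2 ^ θ / r - 2 ^ θ = 2 ^ θ * (1 - r) / r := by
    field_simp
  rw [hne, abs_div, abs_mul, abs_of_pos hr0, abs_of_pos (Real.rpow_pos_of_pos two_pos θ)]
  have h1r : |1 - r| ≤ C / x := by rw [abs_sub_comm]; exact hr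
  calc 2 ^ θ * |1 - r| / r ≤ 2 ^ θ * (C / x) / (1/2) := by
        apply div_le_div₀ (by positivity) (mul_le_mul_of_nonneg_left h1r (by positivity))
          (by norm_num) hrhalf
    _ = 2 ^ θ * (4 * C) / n := by
        rw [hxdef]; field_simp; ring


lemma realBetaIntegrable {a b : ℝ} (ha : 0 < a) (hb : 0 < b) :
    IntervalIntegrable (fun t : ℝ => t ^ (a - 1) * (1 - t) ^ (b - 1)) volume 0 1 := by
  have hc := Complex.betaIntegral_convergent (u := (a : ℂ)) (v := (b : ℂ))
    (by simpa using ha) (by simpa using hb)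
  rw [intervalIntegrable_iff_integrableOn_Ioc_of_le zero_le_one] at hc ⊢
  have h2 : IntegrableOn (fun x : ℝ => ((x ^ (a - 1) * (1 - x) ^ (b - 1) : ℝ) : ℂ))
      (Set.Ioc 0 1) volume := by
    refine hc.congr_fun (fun x hx => ?_) measurableSet_Ioc
    have hx0 : (0:ℝ) ≤ x := hx.1.le
    have hx1 : (0:ℝ) ≤ 1 - x := by linarith [hx.2]
    dsimp only
    rw [show ((a:ℂ) - 1) = ((a - 1 : ℝ) : ℂ) by push_cast; ring,
      show ((b:ℂ) - 1) = ((b - 1 : ℝ) : ℂ) by push_cast; ring,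
      show (1 - (x:ℂ)) = ((1 - x : ℝ) : ℂ) by push_cast; ring,
      Complex.ofReal_mul, Complex.ofReal_cpow hx0, Complex.ofReal_cpow hx1]
  exact (by simpa using h2.re : Integrable (fun t : ℝ => t ^ (a - 1) * (1 - t) ^ (b - 1)) (volume.restrict (Set.Ioc 0 1)))

lemma realBeta {a b : ℝ} (ha : 0 < a) (hb : 0 < b) :
    ∫ t in (0:ℝ)..1, t ^ (a - 1) * (1 - t) ^ (b - 1)
      = Real.Gamma a * Real.Gamma b / Real.Gamma (a + b) := by
  have hcb : Complex.betaIntegral a b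
      = ((∫ t in (0:ℝ)..1, t ^ (a - 1) * (1 - t) ^ (b - 1) : ℝ) : ℂ) := by
    rw [Complex.betaIntegral, ← intervalIntegral.integral_ofReal]
    apply intervalIntegral.integral_congr
    intro x hx
    rw [Set.uIcc_of_le zero_le_one] at hx
    have hx0 : (0:ℝ) ≤ x := hx.1
    have hx1 : (0:ℝ) ≤ 1 - x := by linarith [hx.2]
    dsimp only
    rw [show ((a:ℂ) - 1) = ((a - 1 : ℝ) : ℂ) by push_cast; ring,
      show ((b:ℂ) - 1) = ((b - 1 : ℝ) : ℂ) by push_cast; ring,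
      show (1 - (x:ℂ)) = ((1 - x : ℝ) : ℂ) by push_cast; ring,
      Complex.ofReal_mul, Complex.ofReal_cpow hx0, Complex.ofReal_cpow hx1]
  have hgamma := Complex.Gamma_mul_Gamma_eq_betaIntegral (s := (a : ℂ)) (t := (b : ℂ))
    (by simpa using ha) (by simpa using hb)
  rw [hcb, Complex.Gamma_ofReal, Complex.Gamma_ofReal,
    show ((a : ℂ) + (b : ℂ)) = ((a + b : ℝ) : ℂ) by push_cast; ring,
    Complex.Gamma_ofReal] at hgamma
  have hreal : Real.Gamma a * Real.Gamma b
      = Real.Gamma (a + b) * ∫ t in (0:ℝ)..1, t ^ (a - 1) * (1 - t) ^ (b - 1) := by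
    exact_mod_cast hgamma
  rw [eq_div_iff (Real.Gamma_pos_of_pos (by linarith : (0:ℝ) < a + b)).ne']
  rw [hreal]; ring

lemma partA {θ κ : ℝ} (hθ : 0 < θ) (hκ : 0 < κ) :
    IntegrableOn (fun u : ℝ => u ^ θ *
        ((2 ^ κ * Real.Gamma κ)⁻¹ * Real.exp (-u / 2) * u ^ (κ - 1))) (Set.Ioi 0) volume ∧
    ∫ u in Set.Ioi (0:ℝ), u ^ θ *
        ((2 ^ κ * Real.Gamma κ)⁻¹ * Real.exp (-u / 2) * u ^ (κ - 1))
      = 2 ^ θ * Real.Gamma (θ + κ) / Real.Gamma κ := by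
  set c : ℝ := (2 ^ κ * Real.Gamma κ)⁻¹ with hc
  have hΓκ : 0 < Real.Gamma κ := Real.Gamma_pos_of_pos hκ
  have hc0 : 0 < c := by rw [hc]; positivity
  have hpt : ∀ u ∈ Set.Ioi (0:ℝ), u ^ θ * (c * Real.exp (-u / 2) * u ^ (κ - 1))
      = c * (u ^ (θ + κ - 1) * Real.exp (-((1/2) * u))) := by
    intro u hu
    have hu0 : (0:ℝ) < u := hu
    rw [show θ + κ - 1 = θ + (κ - 1) by ring, Real.rpow_add hu0,
      show -u / 2 = -((1/2) * u) by ring]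
    ring
  constructor
  · have base : IntegrableOn (fun x : ℝ => Real.exp (-x) * x ^ (θ + κ - 1))
        (Set.Ioi 0) volume := Real.GammaIntegral_convergent (by positivity)
    have scaled : IntegrableOn (fun x : ℝ => Real.exp (-((1/2) * x)) * ((1/2) * x) ^ (θ + κ - 1))
        (Set.Ioi 0) volume := by
      exact (integrableOn_Ioi_comp_mul_left_iff
        (fun x : ℝ => Real.exp (-x) * x ^ (θ + κ - 1)) 0 (by norm_num : (0:ℝ) < 1/2)).2
        (by simpa using base)
    have final : IntegrableOn (fun x : ℝ =>
        (c * 2 ^ (θ + κ - 1)) * (Real.exp (-((1/2) * x)) * ((1/2) * x) ^ (θ + κ - 1)))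
        (Set.Ioi 0) volume := scaled.const_mul _
    refine final.congr_fun (fun u hu => ?_) measurableSet_Ioi
    have hu0 : (0:ℝ) < u := hu
    dsimp only
    rw [Real.mul_rpow (by norm_num : (0:ℝ) ≤ 1/2) hu0.le]
    rw [hpt u hu]
    have h2 : (2:ℝ) ^ (θ + κ - 1) * (1/2 : ℝ) ^ (θ + κ - 1) = 1 := by
      rw [← Real.mul_rpow (by norm_num) (by norm_num)]
      norm_num
    linear_combination (c * Real.exp (-(1/2 * u)) * u ^ (θ + κ - 1)) * h2
  · rw [setIntegral_congr_fun measurableSet_Ioi hpt, integral_const_mul,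
      Real.integral_rpow_mul_exp_neg_mul_Ioi (by positivity : (0:ℝ) < θ + κ) (by norm_num : (0:ℝ) < 1/2)]
    rw [show (1:ℝ) / (1/2) = 2 by norm_num, Real.rpow_add (by norm_num : (0:ℝ) < 2), hc]
    field_simp

lemma partB {θ p q N K : ℝ} (hθ : 0 < θ) (hp : 0 < p) (hq : 0 < q) (hN : 0 < N) :
    IntegrableOn (fun u : ℝ => u ^ θ *
        (if 0 ≤ u ∧ u ≤ N then 1 / N * K * (u / N) ^ (p - 1) * (1 - u / N) ^ (q - 1) else 0))
      (Set.Ioi 0) volume ∧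
    ∫ u in Set.Ioi (0:ℝ), u ^ θ *
        (if 0 ≤ u ∧ u ≤ N then 1 / N * K * (u / N) ^ (p - 1) * (1 - u / N) ^ (q - 1) else 0)
      = N ^ θ * K * (Real.Gamma (θ + p) * Real.Gamma q / Real.Gamma (θ + p + q)) := by
  set h : ℝ → ℝ := fun u => u ^ θ *
      (if 0 ≤ u ∧ u ≤ N then 1 / N * K * (u / N) ^ (p - 1) * (1 - u / N) ^ (q - 1) else 0)
    with hhdef
  set c0 : ℝ := N ^ (θ - 1) * K with hc0def
  set φ : ℝ → ℝ := fun t => t ^ (θ + p - 1) * (1 - t) ^ (q - 1) with hφdef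
  -- h equals c0 * φ (u/N) on Ioc 0 N
  have heq : ∀ u ∈ Set.Ioc (0:ℝ) N, h u = c0 * φ (u / N) := by
    intro u hu
    have hu0 : (0:ℝ) < u := hu.1
    have huN : u ≤ N := hu.2
    have ht0 : (0:ℝ) < u / N := div_pos hu0 hN
    simp only [hhdef, hφdef, hc0def]
    rw [if_pos (⟨hu0.le, huN⟩ : (0:ℝ) ≤ u ∧ u ≤ N)]
    have huθ : u ^ θ = N ^ θ * (u / N) ^ θ := by
      rw [← Real.mul_rpow hN.le ht0.le, mul_div_cancel₀ _ hN.ne']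
    have hsplit : (u / N) ^ θ * (u / N) ^ (p - 1) = (u / N) ^ (θ + p - 1) := by
      rw [← Real.rpow_add ht0]; ring_nf
    have hNθ : N ^ θ * (1 / N) = N ^ (θ - 1) := by
      rw [Real.rpow_sub hN, Real.rpow_one]; field_simp
    calc u ^ θ * (1 / N * K * (u / N) ^ (p - 1) * (1 - u / N) ^ (q - 1))
        = (N ^ θ * (1 / N)) * K * ((u / N) ^ θ * (u / N) ^ (p - 1)) * (1 - u / N) ^ (q - 1) := by
          rw [huθ]; ring
      _ = N ^ (θ - 1) * K * ((u / N) ^ (θ + p - 1) * (1 - u / N) ^ (q - 1)) := by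
          rw [hNθ, hsplit]; ring
  -- h vanishes outside Ioc 0 N (within Ioi 0)
  have hzero : ∀ u ∈ Set.Ioi N, h u = 0 := by
    intro u hu
    have : ¬ (0 ≤ u ∧ u ≤ N) := fun hcon => absurd hcon.2 (not_le.2 hu)
    simp only [hhdef, if_neg this, mul_zero]
  -- interval integrability of φ(u/N) on [0, N]
  have hφint : IntervalIntegrable (fun u : ℝ => φ (u / N)) volume 0 N := by
    have hbeta := realBetaIntegrable (a := θ + p) (b := q) (by positivity) hq
    have := hbeta.comp_mul_right (c := N⁻¹)
    simpa [hφdef, div_eq_mul_inv, inv_inv, hN.ne'] using this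
  have hIocInt : IntegrableOn h (Set.Ioc 0 N) volume := by
    have h1 : IntegrableOn (fun u : ℝ => c0 * φ (u / N)) (Set.Ioc 0 N) volume := by
      have := (hφint.const_mul c0)
      rwa [intervalIntegrable_iff_integrableOn_Ioc_of_le hN.le] at this
    exact h1.congr_fun (fun u hu => (heq u hu).symm) measurableSet_Ioc
  have hIoiInt : IntegrableOn h (Set.Ioi N) volume := by
    refine (integrableOn_zero (s := Set.Ioi N)).congr_fun ?_ measurableSet_Ioi
    exact fun u hu => (hzero u hu).symm
  have hunion : Set.Ioc (0:ℝ) 0 ∪ Set.Ioi (0:ℝ) = Set.Ioi (0:ℝ) := by simp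
  have hsetsplit : Set.Ioc (0:ℝ) N ∪ Set.Ioi N = Set.Ioi 0 := Set.Ioc_union_Ioi_eq_Ioi hN.le
  constructor
  · rw [← hsetsplit]
    exact hIocInt.union hIoiInt
  · rw [← hsetsplit, setIntegral_union (Set.Ioc_disjoint_Ioi le_rfl) measurableSet_Ioi
      hIocInt hIoiInt]
    rw [setIntegral_congr_fun measurableSet_Ioi hzero]
    simp only [MeasureTheory.integral_zero, add_zero]
    rw [setIntegral_congr_fun measurableSet_Ioc heq,
      ← intervalIntegral.integral_of_le hN.le, intervalIntegral.integral_const_mul,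
      intervalIntegral.integral_comp_div (c := N) φ hN.ne']
    rw [zero_div, div_self hN.ne', smul_eq_mul, hφdef]
    rw [realBeta (by positivity : (0:ℝ) < θ + p) hq]
    rw [hc0def]
    have : N ^ (θ - 1) * N = N ^ θ := by
      rw [Real.rpow_sub hN, Real.rpow_one]; field_simp
    calc N ^ (θ - 1) * K * (N * (Real.Gamma (θ + p) * Real.Gamma q / Real.Gamma (θ + p + q)))
        = (N ^ (θ - 1) * N) * K * (Real.Gamma (θ + p) * Real.Gamma q / Real.Gamma (θ + p + q)) := by
          ring
      _ = _ := by rw [this]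

open MeasureTheory Filter

/-- For `θ > 0` and `k ≥ 1`, with `g` the `χ²_k` density and `f_n` the density of
`n·Beta(k/2,(n-k)/2)`, the integral `∫_0^∞ u^θ (g(u) − f_n(u)) du` equals
`Γ((2θ+k)/2)/Γ(k/2) · [2^θ − n^θ Γ(n/2)/Γ(θ+n/2)]`, and this quantity is `O(1/n)`. -/
theorem stmt_5 (k : ℕ) (hk : 1 ≤ k) (θ : ℝ) (hθ : 0 < θ)
    (g : ℝ → ℝ)
    (hg : ∀ u : ℝ, 0 < u → g u =
      (2 ^ ((k : ℝ) / 2) * Real.Gamma ((k : ℝ) / 2))⁻¹ * Real.exp (-u / 2) *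
        u ^ ((k : ℝ) / 2 - 1))
    (f : ℕ → ℝ → ℝ)
    (hf : ∀ (n : ℕ) (u : ℝ), f n u =
      if 0 ≤ u ∧ u ≤ (n : ℝ) then
        (1 / (n : ℝ)) * (Real.Gamma ((n : ℝ) / 2) /
          (Real.Gamma ((k : ℝ) / 2) * Real.Gamma (((n : ℝ) - (k : ℝ)) / 2))) *
          (u / n) ^ ((k : ℝ) / 2 - 1) * (1 - u / n) ^ (((n : ℝ) - (k : ℝ)) / 2 - 1)
      else 0) :
    (∀ n : ℕ, k < n →
      ∫ u in Set.Ioi (0 : ℝ), u ^ θ * (g u - f n u)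
        = Real.Gamma ((2 * θ + (k : ℝ)) / 2) / Real.Gamma ((k : ℝ) / 2) *
          ((2 : ℝ) ^ θ - (n : ℝ) ^ θ * Real.Gamma ((n : ℝ) / 2) /
            Real.Gamma (θ + (n : ℝ) / 2))) ∧
    (∃ C : ℝ, ∀ᶠ n : ℕ in Filter.atTop,
      |(n : ℝ) ^ θ * Real.Gamma ((n : ℝ) / 2) / Real.Gamma (θ + (n : ℝ) / 2) - 2 ^ θ|
        ≤ C / (n : ℝ)) := by
  constructor
  · intro n hkn
    have hk1 : (1:ℝ) ≤ (k:ℝ) := by exact_mod_cast hk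
    have hknR : (k:ℝ) < (n:ℝ) := by exact_mod_cast hkn
    have hκ : (0:ℝ) < (k:ℝ)/2 := by linarith
    have hq : (0:ℝ) < ((n:ℝ) - (k:ℝ))/2 := by linarith
    have hN : (0:ℝ) < (n:ℝ) := by linarith
    obtain ⟨hAint, hAval⟩ := partA hθ hκ
    obtain ⟨hBint, hBval⟩ := partB (p := (k:ℝ)/2) (q := ((n:ℝ) - (k:ℝ))/2) (N := (n:ℝ))
      (K := Real.Gamma ((n:ℝ)/2) /
        (Real.Gamma ((k:ℝ)/2) * Real.Gamma (((n:ℝ) - (k:ℝ))/2))) hθ hκ hq hN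
    have hgInt : IntegrableOn (fun u : ℝ => u ^ θ * g u) (Set.Ioi 0) volume :=
      hAint.congr_fun (fun u hu => by rw [hg u hu]) measurableSet_Ioi
    have hgVal : ∫ u in Set.Ioi (0:ℝ), u ^ θ * g u
        = 2 ^ θ * Real.Gamma (θ + (k:ℝ)/2) / Real.Gamma ((k:ℝ)/2) := by
      rw [← hAval]
      exact setIntegral_congr_fun measurableSet_Ioi (fun u hu => by rw [hg u hu])
    have hfun : (fun u : ℝ => u ^ θ * f n u) = (fun u : ℝ => u ^ θ *
        (if 0 ≤ u ∧ u ≤ (n:ℝ) then 1 / (n:ℝ) * (Real.Gamma ((n:ℝ)/2) /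
          (Real.Gamma ((k:ℝ)/2) * Real.Gamma (((n:ℝ) - (k:ℝ))/2))) *
          (u / (n:ℝ)) ^ ((k:ℝ)/2 - 1) * (1 - u / (n:ℝ)) ^ (((n:ℝ) - (k:ℝ))/2 - 1) else 0)) := by
      funext u
      rw [hf n u]
    have hfInt : IntegrableOn (fun u : ℝ => u ^ θ * f n u) (Set.Ioi 0) volume := by
      rw [hfun]; exact hBint
    have hfVal : ∫ u in Set.Ioi (0:ℝ), u ^ θ * f n u
        = (n:ℝ) ^ θ * (Real.Gamma ((n:ℝ)/2) /
            (Real.Gamma ((k:ℝ)/2) * Real.Gamma (((n:ℝ) - (k:ℝ))/2))) *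
          (Real.Gamma (θ + (k:ℝ)/2) * Real.Gamma (((n:ℝ) - (k:ℝ))/2) /
            Real.Gamma (θ + (k:ℝ)/2 + ((n:ℝ) - (k:ℝ))/2)) := by
      rw [hfun]; exact hBval
    have hsplit : ∀ u ∈ Set.Ioi (0:ℝ), u ^ θ * (g u - f n u)
        = u ^ θ * g u - u ^ θ * f n u := fun u _ => by ring
    rw [setIntegral_congr_fun measurableSet_Ioi hsplit, integral_sub hgInt hfInt,
      hgVal, hfVal]
    rw [show θ + (k:ℝ)/2 + ((n:ℝ) - (k:ℝ))/2 = θ + (n:ℝ)/2 by ring,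
      show (2 * θ + (k:ℝ)) / 2 = θ + (k:ℝ)/2 by ring]
    have hΓκ : Real.Gamma ((k:ℝ)/2) ≠ 0 := (Real.Gamma_pos_of_pos hκ).ne'
    have hΓq : Real.Gamma (((n:ℝ) - (k:ℝ))/2) ≠ 0 := (Real.Gamma_pos_of_pos hq).ne'
    have hΓn : Real.Gamma (θ + (n:ℝ)/2) ≠ 0 :=
      (Real.Gamma_pos_of_pos (by linarith : (0:ℝ) < θ + (n:ℝ)/2)).ne'
    field_simp
  · exact part2 θ hθ
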